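/- The matrix oper forms ∂_x + M₁ and ∂_x + M₂, where M₁ has rows (ℓ₁/x, 0, x^{3M} − E), (1, (ℓ₂−ℓ₁)/x, 0), (0, 1, −ℓ₂/x), and M₂ has rows (0, −w̃₁/x², w̃₂/x³ + x^{3M} − E), (1, 0, 0), (0, 1, 0), are gauge equivalent by an upper-triangular unipotent gauge transformation exp(y), y ∈ n₊(K), provided w̃₁ = ℓ̃₁ℓ̃₂ + ℓ̃₁ℓ̃₃ + ℓ̃₂ℓ̃₃ − 2 and w̃₂ = −ℓ̃₁ℓ̃₂ℓ̃₃ with ℓ̃₁ = −ℓ₁ + 2, ℓ̃₂ = ℓ₁ − ℓ₂ + 1, ℓ̃₃ = ℓ₂. -/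
import Mathlib


open Matrix

lemma deriv_zpow_smul (C : ℂ) (n : ℤ) (x : ℂ) (hx : x ≠ 0) :
    HasDerivAt (fun t : ℂ => C * t ^ n) (C * (n * x ^ (n - 1))) x :=
  (hasDerivAt_zpow n x (Or.inl hx)).const_mul C

/-- The oper forms ∂_x + M₁ and ∂_x + M₂ (the BLZ-type form and the
Bazhanov–Hibberd–Khoroshkin form) are gauge equivalent by a unipotent upper
triangular gauge transformation g = exp(y), y ∈ n₊(K): there are functions a, b, c
(the entries of g), differentiable away from 0, with g' = g M₂ − M₁ g. -/
theorem gauge_equivalence_bhk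
    (ℓ₁ ℓ₂ M E : ℂ)
    (ℓt₁ ℓt₂ ℓt₃ w₁ w₂ : ℂ)
    (hℓt₁ : ℓt₁ = -ℓ₁ + 2) (hℓt₂ : ℓt₂ = ℓ₁ - ℓ₂ + 1) (hℓt₃ : ℓt₃ = ℓ₂)
    (hw₁ : w₁ = ℓt₁*ℓt₂ + ℓt₁*ℓt₃ + ℓt₂*ℓt₃ - 2)
    (hw₂ : w₂ = -ℓt₁*ℓt₂*ℓt₃)
    (M₁ M₂ : ℂ → Matrix (Fin 3) (Fin 3) ℂ)
    (hM₁ : ∀ x : ℂ, M₁ x =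
      !![ℓ₁/x, 0, x^(3*M) - E; 1, (ℓ₂ - ℓ₁)/x, 0; 0, 1, -ℓ₂/x])
    (hM₂ : ∀ x : ℂ, M₂ x =
      !![0, -w₁/x^2, w₂/x^3 + x^(3*M) - E; 1, 0, 0; 0, 1, 0]) :
    ∃ a b c : ℂ → ℂ,
      (∀ x : ℂ, x ≠ 0 →
        DifferentiableAt ℂ a x ∧ DifferentiableAt ℂ b x ∧ DifferentiableAt ℂ c x) ∧
      (∀ x : ℂ, x ≠ 0 →
        !![0, deriv a x, deriv b x; 0, 0, deriv c x; 0, 0, 0]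
          + M₁ x * !![1, a x, b x; 0, 1, c x; 0, 0, 1]
          = !![1, a x, b x; 0, 1, c x; 0, 0, 1] * M₂ x) := by
  set B : ℂ := w₁ + ℓ₁^2 - ℓ₁ with hB
  refine ⟨fun x => ℓ₁ * x ^ (-1 : ℤ), fun x => B * x ^ (-2 : ℤ),
    fun x => ℓ₂ * x ^ (-1 : ℤ), fun x hx =>
      ⟨(deriv_zpow_smul ℓ₁ (-1) x hx).differentiableAt,
       (deriv_zpow_smul B (-2) x hx).differentiableAt,
       (deriv_zpow_smul ℓ₂ (-1) x hx).differentiableAt⟩, ?_⟩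
  intro x hx
  have ha : deriv (fun t : ℂ => ℓ₁ * t ^ (-1 : ℤ)) x = ℓ₁ * (-1 * x ^ (-2 : ℤ)) := by
    simpa using (deriv_zpow_smul ℓ₁ (-1) x hx).deriv
  have hb : deriv (fun t : ℂ => B * t ^ (-2 : ℤ)) x = B * (-2 * x ^ (-3 : ℤ)) := by
    simpa using (deriv_zpow_smul B (-2) x hx).deriv
  have hc : deriv (fun t : ℂ => ℓ₂ * t ^ (-1 : ℤ)) x = ℓ₂ * (-1 * x ^ (-2 : ℤ)) := by
    simpa using (deriv_zpow_smul ℓ₂ (-1) x hx).deriv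
  rw [ha, hb, hc, hM₁, hM₂]
  have h1 : x ^ (-1 : ℤ) = x⁻¹ := by simp
  have h2 : x ^ (-2 : ℤ) = (x^2)⁻¹ := by
    rw [_root_.zpow_neg]; norm_cast
  have h3 : x ^ (-3 : ℤ) = (x^3)⁻¹ := by
    rw [_root_.zpow_neg]; norm_cast
  ext i j
  fin_cases i <;> fin_cases j <;>
    simp [Matrix.mul_apply, Fin.sum_univ_three, Matrix.vecHead, Matrix.vecTail, h1, h2, h3, div_eq_mul_inv, hB] <;>
    field_simp <;>
    subst hℓt₁ hℓt₂ hℓt₃ hw₁ hw₂ <;> ring
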